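/- arXiv:2112.01841 — 2 statements merged into one kernel-verified Lean document; each statement's English description precedes it below -/
import Mathlib

section
/- Let μ ∈ ℝⁿ have nonnegative components, let ν ∈ ℝ^{n×n} be full rank, and Σ := ννᵀ. Then the infimum of (α·μ)/‖αᵀν‖ over all α with nonnegative components and α ≠ 0 equals min_{i ≤ n} μ_i/√(Σ_ii). -/
open Matrix

noncomputable def enorm {n : ℕ} (x : Fin n → ℝ) : ℝ := Real.sqrt (x ⬝ᵥ x)

noncomputable def tvsObj {n : ℕ} (μ : Fin n → ℝ) (ν : Matrix (Fin n) (Fin n) ℝ)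
    (α : Fin n → ℝ) : ℝ := (α ⬝ᵥ μ) / _root_.enorm (vecMul α ν)

lemma enorm_eq_norm {n : ℕ} (x : Fin n → ℝ) :
    _root_.enorm x = ‖(WithLp.equiv 2 (Fin n → ℝ)).symm x‖ := by
  rw [EuclideanSpace.norm_eq, _root_.enorm, dotProduct]
  congr 1
  refine Finset.sum_congr rfl fun i _ => ?_
  rw [WithLp.equiv_symm_apply, PiLp.toLp_apply, Real.norm_eq_abs, sq_abs, sq]

lemma tvs_enorm_sum_le {n : ℕ} (α : Fin n → ℝ) (hα : ∀ i, 0 ≤ α i)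
    (ν : Matrix (Fin n) (Fin n) ℝ) :
    _root_.enorm (vecMul α ν) ≤ ∑ i, α i * _root_.enorm (ν i) := by
  rw [enorm_eq_norm]
  have h1 : (WithLp.equiv 2 (Fin n → ℝ)).symm (vecMul α ν)
      = ∑ i, α i • (WithLp.equiv 2 (Fin n → ℝ)).symm (ν i) := by
    ext j
    rw [WithLp.ofLp_sum, Finset.sum_apply]
    simp [vecMul, dotProduct, WithLp.equiv_symm_apply]
  rw [h1]
  calc ‖∑ i, α i • (WithLp.equiv 2 (Fin n → ℝ)).symm (ν i)‖
      ≤ ∑ i, ‖α i • (WithLp.equiv 2 (Fin n → ℝ)).symm (ν i)‖ := norm_sum_le _ _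
    _ = ∑ i, α i * _root_.enorm (ν i) := by
        refine Finset.sum_congr rfl fun i _ => ?_
        rw [norm_smul, Real.norm_eq_abs, abs_of_nonneg (hα i), enorm_eq_norm]

theorem stmt2 {n : ℕ} (hn : 0 < n) (μ : Fin n → ℝ) (hμ : ∀ i, 0 ≤ μ i)
    (ν : Matrix (Fin n) (Fin n) ℝ) (hν : IsUnit ν.det)
    (Sig : Matrix (Fin n) (Fin n) ℝ) (hSig : Sig = ν * νᵀ) :
    sInf {r : ℝ | ∃ α : Fin n → ℝ, (∀ i, 0 ≤ α i) ∧ α ≠ 0 ∧ tvsObj μ ν α = r}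
      = Finset.univ.inf' (Finset.univ_nonempty_iff.mpr ⟨⟨0, hn⟩⟩)
          (fun i => μ i / Real.sqrt (Sig i i)) := by
  set m := Finset.univ.inf' (Finset.univ_nonempty_iff.mpr ⟨⟨0, hn⟩⟩)
      (fun i => μ i / Real.sqrt (Sig i i)) with hm
  have hSigd : ∀ i, Sig i i = ν i ⬝ᵥ ν i := by
    intro i
    simp [hSig, Matrix.mul_apply, dotProduct]
  -- rows of ν are nonzero
  have hrow : ∀ i, ν i ≠ 0 := by
    intro i h
    have : ν.det = 0 := Matrix.det_eq_zero_of_row_eq_zero i (fun j => congrFun h j)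
    rw [this] at hν
    exact (not_isUnit_zero (M₀ := ℝ)) hν
  have hdotpos : ∀ i, 0 < ν i ⬝ᵥ ν i := fun i =>
    lt_of_le_of_ne (Finset.sum_nonneg fun j _ => mul_self_nonneg _)
      (fun h => hrow i (dotProduct_self_eq_zero.mp h.symm))
  have hsqrtpos : ∀ i, 0 < Real.sqrt (Sig i i) := fun i => by
    rw [hSigd i]; exact Real.sqrt_pos.mpr (hdotpos i)
  have henorm_row : ∀ i, _root_.enorm (ν i) = Real.sqrt (Sig i i) := fun i => by
    rw [_root_.enorm, hSigd i]
  -- m is nonneg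
  have hm0 : 0 ≤ m := by
    rw [hm]
    apply Finset.le_inf'
    intro i _
    exact div_nonneg (hμ i) (Real.sqrt_nonneg _)
  -- μ i ≥ m * sqrt(Sig i i)
  have hμm : ∀ i, m * Real.sqrt (Sig i i) ≤ μ i := by
    intro i
    have h1 : m ≤ μ i / Real.sqrt (Sig i i) :=
      Finset.inf'_le _ (Finset.mem_univ i)
    exact (le_div_iff₀ (hsqrtpos i)).mp h1
  -- lower bound
  have hlb : ∀ r ∈ {r : ℝ | ∃ α : Fin n → ℝ, (∀ i, 0 ≤ α i) ∧ α ≠ 0 ∧ tvsObj μ ν α = r},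
      m ≤ r := by
    rintro r ⟨α, hα, hα0, rfl⟩
    have hv : vecMul α ν ≠ 0 := by
      intro h
      have hinj : Function.Injective ν.vecMul :=
        Matrix.vecMul_injective_iff_isUnit.mpr ((Matrix.isUnit_iff_isUnit_det ν).mpr hν)
      apply hα0
      apply hinj
      simp [h]
    have hvpos : 0 < _root_.enorm (vecMul α ν) := by
      rw [enorm_eq_norm]
      refine norm_pos_iff.mpr ?_
      intro h
      apply hv
      ext j
      exact congrFun (congrArg (WithLp.equiv 2 (Fin n → ℝ)) h) j
    rw [tvsObj, le_div_iff₀ hvpos]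
    calc m * _root_.enorm (vecMul α ν) ≤ m * ∑ i, α i * _root_.enorm (ν i) := by
          exact mul_le_mul_of_nonneg_left (tvs_enorm_sum_le α hα ν) hm0
      _ = ∑ i, α i * (m * Real.sqrt (Sig i i)) := by
          rw [Finset.mul_sum]
          refine Finset.sum_congr rfl fun i _ => ?_
          rw [henorm_row i]; ring
      _ ≤ ∑ i, α i * μ i := by
          refine Finset.sum_le_sum fun i _ => ?_
          exact mul_le_mul_of_nonneg_left (hμm i) (hα i)
      _ = α ⬝ᵥ μ := rfl
  -- membership: the minimizer
  obtain ⟨i₀, -, hi₀⟩ := Finset.exists_mem_eq_inf' (Finset.univ_nonempty_iff.mpr ⟨⟨0, hn⟩⟩)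
      (fun i => μ i / Real.sqrt (Sig i i))
  have hmem : m ∈ {r : ℝ | ∃ α : Fin n → ℝ, (∀ i, 0 ≤ α i) ∧ α ≠ 0 ∧ tvsObj μ ν α = r} := by
    refine ⟨Pi.single i₀ 1, ?_, ?_, ?_⟩
    · intro i
      rcases eq_or_ne i i₀ with h | h
      · subst h; simp
      · simp [Pi.single_apply, h]
    · intro h
      have := congrFun h i₀
      simp at this
    · rw [tvsObj, Matrix.single_one_vecMul, single_dotProduct, one_mul,
        Matrix.row_def, henorm_row i₀, hm, ← hi₀]
  exact le_antisymm (csInf_le ⟨m, hlb⟩ hmem) (le_csInf ⟨m, hmem⟩ hlb)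
end

section
/- Let μ ∈ ℝⁿ have nonnegative components, ν ∈ ℝ^{n×n} full rank, Σ := ννᵀ, and let ī be an index minimizing μ_i/√(Σ_ii). Then the standard basis vector e_{ī} attains the infimum of (α·μ)/‖αᵀν‖ over nonnegative nonzero α, i.e. (e_{ī}·μ)/‖e_{ī}ᵀν‖ = min_{i} μ_i/√(Σ_ii). -/
open Matrix

theorem stmt3 {n : ℕ} (μ : Fin n → ℝ) (hμ : ∀ i, 0 ≤ μ i)
    (ν : Matrix (Fin n) (Fin n) ℝ) (hν : IsUnit ν.det)
    (Sig : Matrix (Fin n) (Fin n) ℝ) (hSig : Sig = ν * νᵀ)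
    (ibar : Fin n)
    (hibar : ∀ i, μ ibar / Real.sqrt (Sig ibar ibar) ≤ μ i / Real.sqrt (Sig i i)) :
    tvsObj μ ν (Pi.single ibar 1) = μ ibar / Real.sqrt (Sig ibar ibar) ∧
    ∀ α : Fin n → ℝ, (∀ i, 0 ≤ α i) → α ≠ 0 →
      tvsObj μ ν (Pi.single ibar 1) ≤ tvsObj μ ν α := by
  have hrow : ∀ i, vecMul (Pi.single i 1) ν = ν i := by
    intro i; ext j
    simp [vecMul, dotProduct, Pi.single_apply]
  have hSigdiag : ∀ i, Sig i i = ν i ⬝ᵥ ν i := by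
    intro i; simp [hSig, Matrix.mul_apply, dotProduct, Matrix.transpose_apply]
  have hinj : ∀ α : Fin n → ℝ, vecMul α ν = 0 → α = 0 := by
    intro α h
    have h2 := congrArg (fun v => vecMul v ν⁻¹) h
    simpa [Matrix.vecMul_vecMul, Matrix.mul_nonsing_inv ν hν] using h2
  have hrow_ne : ∀ i, ν i ≠ 0 := by
    intro i h
    have h1 : (Pi.single i 1 : Fin n → ℝ) = 0 := hinj _ (by rw [hrow]; exact h)
    simpa using congrFun h1 i
  have hdd : ∀ v : Fin n → ℝ, 0 ≤ v ⬝ᵥ v :=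
    fun v => Finset.sum_nonneg fun i _ => mul_self_nonneg _
  have hSigpos : ∀ i, 0 < Sig i i := by
    intro i
    rw [hSigdiag]
    rcases (hdd (ν i)).lt_or_eq with h | h
    · exact h
    · exact absurd (dotProduct_self_eq_zero.mp h.symm) (hrow_ne i)
  have hsqrtpos : ∀ i, 0 < Real.sqrt (Sig i i) := fun i => Real.sqrt_pos.mpr (hSigpos i)
  have henorm_row : ∀ i, _root_.enorm (ν i) = Real.sqrt (Sig i i) := by
    intro i; rw [_root_.enorm, hSigdiag]
  have hfirst : tvsObj μ ν (Pi.single ibar 1) = μ ibar / Real.sqrt (Sig ibar ibar) := by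
    rw [tvsObj, hrow, henorm_row]
    congr 1
    simp [dotProduct, Pi.single_apply]
  refine ⟨hfirst, fun α hα hα0 => ?_⟩
  rw [hfirst]
  set c := μ ibar / Real.sqrt (Sig ibar ibar) with hc
  have hcnonneg : 0 ≤ c := div_nonneg (hμ ibar) (hsqrtpos ibar).le
  -- vecMul as a sum of rows
  have hsum : vecMul α ν = ∑ i, α i • ν i := by
    ext j
    simp [vecMul, dotProduct, Finset.sum_apply]
  -- triangle inequality
  have hkey : _root_.enorm (vecMul α ν) ≤ ∑ i, α i * Real.sqrt (Sig i i) := by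
    rw [enorm_eq_norm, hsum]
    have heq : (WithLp.equiv 2 (Fin n → ℝ)).symm (∑ i, α i • ν i)
        = ∑ i, α i • (WithLp.equiv 2 (Fin n → ℝ)).symm (ν i) := by
        rw [WithLp.equiv_symm_apply, WithLp.toLp_sum]; rfl
    rw [heq]
    calc ‖∑ i, α i • (WithLp.equiv 2 (Fin n → ℝ)).symm (ν i)‖
        ≤ ∑ i, ‖α i • (WithLp.equiv 2 (Fin n → ℝ)).symm (ν i)‖ := norm_sum_le _ _
      _ = ∑ i, α i * Real.sqrt (Sig i i) := by
          refine Finset.sum_congr rfl fun i _ => ?_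
          rw [norm_smul, Real.norm_eq_abs, abs_of_nonneg (hα i),
            ← enorm_eq_norm, henorm_row]
  have hNpos : 0 < _root_.enorm (vecMul α ν) := by
    rw [_root_.enorm]
    apply Real.sqrt_pos.mpr
    have hne : vecMul α ν ≠ 0 := fun h => hα0 (hinj α h)
    rcases (hdd (vecMul α ν)).lt_or_eq with h | h
    · exact h
    · exact absurd (dotProduct_self_eq_zero.mp h.symm) hne
  rw [tvsObj, le_div_iff₀ hNpos]
  calc c * _root_.enorm (vecMul α ν) ≤ c * ∑ i, α i * Real.sqrt (Sig i i) :=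
        mul_le_mul_of_nonneg_left hkey hcnonneg
    _ = ∑ i, α i * (c * Real.sqrt (Sig i i)) := by
        rw [Finset.mul_sum]; exact Finset.sum_congr rfl fun i _ => by ring
    _ ≤ ∑ i, α i * μ i := by
        refine Finset.sum_le_sum fun i _ => ?_
        exact mul_le_mul_of_nonneg_left
          ((le_div_iff₀ (hsqrtpos i)).mp (hibar i)) (hα i)
    _ = α ⬝ᵥ μ := rfl
end
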